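/- arXiv:2509.03672 — 2 statements merged into one kernel-verified Lean document; each statement's English description precedes it below -/
import Mathlib

section
/- Gibbs distributions are Lipschitz in their rewards: for rewards r, r' : Y → ℝ on a finite set Y, reference π_ref with full support, and β > 0, the induced Gibbs distributions ν_r and ν_{r'} satisfy ‖ν_r − ν_{r'}‖₁ ≤ (2/β) · max_y |r(y) − r'(y)|. -/
lemma aux_exp_sub_one_le {h : ℝ} (hh : 0 ≤ h) :
    Real.exp h - 1 ≤ h / 2 * (Real.exp h + 1) := by
  have key : MonotoneOn (fun x : ℝ => x / 2 * (Real.exp x + 1) - (Real.exp x - 1))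
      (Set.Ici 0) := by
    apply monotoneOn_of_deriv_nonneg (convex_Ici 0)
    · fun_prop
    · intro x _
      exact (Differentiable.differentiableAt (by fun_prop)).differentiableWithinAt
    · intro x hx
      have hd : HasDerivAt (fun x : ℝ => x / 2 * (Real.exp x + 1) - (Real.exp x - 1))
          ((1 / 2) * (Real.exp x + 1) + x / 2 * Real.exp x - Real.exp x) x := by
        have h1 : HasDerivAt (fun x : ℝ => x / 2) (1 / 2) x :=
          (hasDerivAt_id x).div_const 2
        have h2 : HasDerivAt (fun x : ℝ => Real.exp x + 1) (Real.exp x) x :=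
          (Real.hasDerivAt_exp x).add_const 1
        have h3 : HasDerivAt (fun x : ℝ => Real.exp x - 1) (Real.exp x) x :=
          (Real.hasDerivAt_exp x).sub_const 1
        exact (h1.mul h2).sub h3
      rw [hd.deriv]
      have hx0 : 0 ≤ x := le_of_lt (by simpa using hx)
      have : Real.exp x * (1 - x) ≤ 1 := by
        have h4 : 1 - x ≤ Real.exp (-x) := by
          have := Real.add_one_le_exp (-x); linarith
        calc Real.exp x * (1 - x) ≤ Real.exp x * Real.exp (-x) := by
              apply mul_le_mul_of_nonneg_left h4 (Real.exp_pos x).le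
          _ = 1 := by rw [← Real.exp_add]; simp
      nlinarith [Real.exp_pos x]
  have := key (Set.self_mem_Ici) (Set.mem_Ici.mpr hh) hh
  simp at this
  linarith

lemma aux_abs_exp_sub_exp (a b : ℝ) :
    |Real.exp a - Real.exp b| ≤ |a - b| / 2 * (Real.exp a + Real.exp b) := by
  rcases le_total b a with hab | hab
  · have h0 : 0 ≤ a - b := by linarith
    rw [abs_of_nonneg h0, abs_of_nonneg (by
      have := Real.exp_le_exp.mpr hab; linarith)]
    have := aux_exp_sub_one_le h0
    have he : Real.exp a = Real.exp b * Real.exp (a - b) := by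
      rw [← Real.exp_add]; ring_nf
    rw [he]
    have hb := (Real.exp_pos b).le
    nlinarith [Real.exp_pos b, Real.exp_pos (a - b)]
  · have h0 : 0 ≤ b - a := by linarith
    rw [abs_sub_comm, abs_sub_comm a b, abs_of_nonneg h0, abs_of_nonneg (by
      have := Real.exp_le_exp.mpr hab; linarith)]
    have := aux_exp_sub_one_le h0
    have he : Real.exp b = Real.exp a * Real.exp (b - a) := by
      rw [← Real.exp_add]; ring_nf
    rw [he]
    nlinarith [Real.exp_pos a, Real.exp_pos (b - a)]

lemma aux_main {Y : Type*} [Fintype Y] [Nonempty Y]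
    (w v : Y → ℝ) (hw : ∀ y, 0 < w y) (hv : ∀ y, 0 < v y)
    (C : ℝ)
    (key : ∀ y y', |w y * v y' - v y * w y'| ≤ C * (w y * v y' + v y * w y')) :
    ∑ y, |w y / (∑ z, w z) - v y / (∑ z, v z)| ≤ 2 * C := by
  have hZ : 0 < ∑ z, w z := Finset.sum_pos (fun y _ => hw y) Finset.univ_nonempty
  have hZ' : 0 < ∑ z, v z := Finset.sum_pos (fun y _ => hv y) Finset.univ_nonempty
  set Z := ∑ z, w z with hZdef
  set Z' := ∑ z, v z with hZ'def
  have hZZ' : 0 < Z * Z' := mul_pos hZ hZ'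
  calc ∑ y, |w y / Z - v y / Z'|
      = ∑ y, |∑ z, (w y * v z - v y * w z)| / (Z * Z') := by
        apply Finset.sum_congr rfl
        intro y _
        have h1 : ∑ z, (w y * v z - v y * w z) = w y * Z' - v y * Z := by
          rw [Finset.sum_sub_distrib, ← Finset.mul_sum, ← Finset.mul_sum]
        have h2 : w y / Z - v y / Z' = (w y * Z' - v y * Z) / (Z * Z') := by
          field_simp
        rw [h2, ← h1, abs_div, abs_of_pos hZZ']
    _ ≤ ∑ y, (∑ z, C * (w y * v z + v y * w z)) / (Z * Z') := by
        apply Finset.sum_le_sum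
        intro y _
        have h3 : |∑ z, (w y * v z - v y * w z)| ≤ ∑ z, C * (w y * v z + v y * w z) :=
          (Finset.abs_sum_le_sum_abs _ _).trans (Finset.sum_le_sum fun z _ => key y z)
        exact div_le_div_of_nonneg_right h3 hZZ'.le
    _ = ∑ y, C * (w y * Z' + v y * Z) / (Z * Z') := by
        apply Finset.sum_congr rfl
        intro y _
        congr 1
        rw [← Finset.mul_sum, Finset.sum_add_distrib, ← Finset.mul_sum, ← Finset.mul_sum]
    _ = 2 * C := by
        rw [← Finset.sum_div, ← Finset.mul_sum, Finset.sum_add_distrib,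
          ← Finset.sum_mul, ← Finset.sum_mul, ← hZdef, ← hZ'def]
        field_simp
        ring

/-- Gibbs distributions are Lipschitz in their rewards in total variation. -/
theorem gibbs_lipschitz_in_reward
    {Y : Type*} [Fintype Y] [Nonempty Y]
    (πref : Y → ℝ) (hpos : ∀ y, 0 < πref y) (hsum : ∑ y, πref y = 1)
    (β : ℝ) (hβ : 0 < β) (r r' : Y → ℝ)
    (ν ν' : Y → ℝ)
    (hν : ∀ y, ν y = πref y * Real.exp (r y / β) /
      (∑ y', πref y' * Real.exp (r y' / β)))
    (hν' : ∀ y, ν' y = πref y * Real.exp (r' y / β) /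
      (∑ y', πref y' * Real.exp (r' y' / β))) :
    ∑ y, |ν y - ν' y| ≤
      (2 / β) * Finset.univ.sup' Finset.univ_nonempty (fun y => |r y - r' y|) := by
  set M := Finset.univ.sup' Finset.univ_nonempty (fun y => |r y - r' y|) with hMdef
  have hM : ∀ y, |r y - r' y| ≤ M := by
    intro y
    rw [hMdef]
    exact Finset.le_sup' (fun z => |r z - r' z|) (Finset.mem_univ y)
  set w : Y → ℝ := fun y => πref y * Real.exp (r y / β) with hwdef
  set v : Y → ℝ := fun y => πref y * Real.exp (r' y / β) with hvdef
  have hw : ∀ y, 0 < w y := fun y => mul_pos (hpos y) (Real.exp_pos _)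
  have hv : ∀ y, 0 < v y := fun y => mul_pos (hpos y) (Real.exp_pos _)
  have key : ∀ y y', |w y * v y' - v y * w y'| ≤
      (M / β) * (w y * v y' + v y * w y') := by
    intro y y'
    set a := r y / β + r' y' / β with hadef
    set b := r' y / β + r y' / β with hbdef
    set c := πref y * πref y' with hcdef
    have hc : 0 < c := mul_pos (hpos y) (hpos y')
    have e1 : w y * v y' = c * Real.exp a := by
      rw [hwdef, hvdef, hadef, hcdef, Real.exp_add]; ring
    have e2 : v y * w y' = c * Real.exp b := by
      rw [hwdef, hvdef, hbdef, hcdef, Real.exp_add]; ring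
    have habs : |a - b| ≤ 2 * (M / β) := by
      have hab : a - b = ((r y - r' y) - (r y' - r' y')) / β := by
        rw [hadef, hbdef]; ring
      rw [hab, abs_div, abs_of_pos hβ]
      have h1 : |(r y - r' y) - (r y' - r' y')| ≤ 2 * M := by
        calc |(r y - r' y) - (r y' - r' y')| ≤ |r y - r' y| + |r y' - r' y'| :=
              abs_sub _ _
          _ ≤ 2 * M := by have := hM y; have := hM y'; linarith
      calc |(r y - r' y) - (r y' - r' y')| / β ≤ 2 * M / β :=
            div_le_div_of_nonneg_right h1 hβ.le
        _ = 2 * (M / β) := by ring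
    calc |w y * v y' - v y * w y'| = c * |Real.exp a - Real.exp b| := by
          rw [e1, e2, ← mul_sub, abs_mul, abs_of_pos hc]
      _ ≤ c * (|a - b| / 2 * (Real.exp a + Real.exp b)) :=
          mul_le_mul_of_nonneg_left (aux_abs_exp_sub_exp a b) hc.le
      _ ≤ c * ((2 * (M / β)) / 2 * (Real.exp a + Real.exp b)) := by
          have hE : 0 ≤ Real.exp a + Real.exp b := by positivity
          have := div_le_div_of_nonneg_right habs (by norm_num : (0:ℝ) < 2).le
          nlinarith [mul_nonneg hc.le hE]
      _ = (M / β) * (c * Real.exp a + c * Real.exp b) := by ring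
      _ = (M / β) * (w y * v y' + v y * w y') := by rw [e1, e2]
  have := aux_main w v hw hv (M / β) key
  calc ∑ y, |ν y - ν' y| = ∑ y, |w y / (∑ z, w z) - v y / (∑ z, v z)| := by
        apply Finset.sum_congr rfl
        intro y _
        rw [hν y, hν' y]
      _ ≤ 2 * (M / β) := this
      _ = (2 / β) * M := by ring
end

section
/- Combining the pessimism decomposition with a confidence ellipsoid: if C = {θ : ‖θ − θ̂‖_{Σ} ≤ η} contains θ*, π* maximizes ⟨v(π), θ*⟩ over Π, and π̂ maximizes min_{θ∈C}⟨v(π), θ⟩, then ⟨v(π*), θ*⟩ − ⟨v(π̂), θ*⟩ ≤ 2η · ‖v(π*)‖_{Σ^{-1}}. -/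
open Matrix

/-- Vector Cauchy–Schwarz for dot products. -/
private lemma dot_cs {d : ℕ} (a b : Fin d → ℝ) :
    a ⬝ᵥ b ≤ Real.sqrt (a ⬝ᵥ a) * Real.sqrt (b ⬝ᵥ b) := by
  have := Real.sum_mul_le_sqrt_mul_sqrt Finset.univ a b
  simpa [dotProduct, pow_two] using this

open scoped MatrixOrder in
/-- Cauchy–Schwarz for a positive semidefinite quadratic form. -/
private lemma mat_cs {d : ℕ} {M : Matrix (Fin d) (Fin d) ℝ} (hM : M.PosSemidef)
    (x y : Fin d → ℝ) :
    x ⬝ᵥ M.mulVec y ≤ Real.sqrt (x ⬝ᵥ M.mulVec x) * Real.sqrt (y ⬝ᵥ M.mulVec y) := by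
  set A := CFC.sqrt M with hA
  have hAA : A * A = M := CFC.sqrt_mul_sqrt_self M hM.nonneg
  have hAt : Aᵀ = A := by
    have : A.IsHermitian := (CFC.sqrt_nonneg M).posSemidef.isHermitian
    simpa [Matrix.IsHermitian, Matrix.conjTranspose_eq_transpose_of_trivial] using this
  have key : ∀ u w : Fin d → ℝ, u ⬝ᵥ M.mulVec w = (A.mulVec u) ⬝ᵥ (A.mulVec w) := by
    intro u w
    rw [← hAA, ← Matrix.mulVec_mulVec, Matrix.dotProduct_mulVec, ← Matrix.mulVec_transpose, hAt]
  rw [key, key, key]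
  exact dot_cs _ _

/-- Triangle inequality for the `M`-seminorm. -/
private lemma mat_triangle {d : ℕ} {M : Matrix (Fin d) (Fin d) ℝ} (hM : M.PosSemidef)
    (a b : Fin d → ℝ) :
    Real.sqrt ((a + b) ⬝ᵥ M.mulVec (a + b)) ≤
      Real.sqrt (a ⬝ᵥ M.mulVec a) + Real.sqrt (b ⬝ᵥ M.mulVec b) := by
  have ha : 0 ≤ a ⬝ᵥ M.mulVec a := by simpa using hM.dotProduct_mulVec_nonneg a
  have hb : 0 ≤ b ⬝ᵥ M.mulVec b := by simpa using hM.dotProduct_mulVec_nonneg b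
  have hab : a ⬝ᵥ M.mulVec b ≤ Real.sqrt (a ⬝ᵥ M.mulVec a) * Real.sqrt (b ⬝ᵥ M.mulVec b) :=
    mat_cs hM a b
  have hba : b ⬝ᵥ M.mulVec a ≤ Real.sqrt (b ⬝ᵥ M.mulVec b) * Real.sqrt (a ⬝ᵥ M.mulVec a) :=
    mat_cs hM b a
  have hexp : (a + b) ⬝ᵥ M.mulVec (a + b) =
      a ⬝ᵥ M.mulVec a + a ⬝ᵥ M.mulVec b + b ⬝ᵥ M.mulVec a + b ⬝ᵥ M.mulVec b := by
    simp [Matrix.mulVec_add, add_dotProduct, dotProduct_add]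
    ring
  have hle : (a + b) ⬝ᵥ M.mulVec (a + b) ≤
      (Real.sqrt (a ⬝ᵥ M.mulVec a) + Real.sqrt (b ⬝ᵥ M.mulVec b)) ^ 2 := by
    rw [hexp]
    have sa := Real.sq_sqrt ha
    have sb := Real.sq_sqrt hb
    nlinarith [Real.sqrt_nonneg (a ⬝ᵥ M.mulVec a), Real.sqrt_nonneg (b ⬝ᵥ M.mulVec b)]
  calc Real.sqrt ((a + b) ⬝ᵥ M.mulVec (a + b))
      ≤ Real.sqrt ((Real.sqrt (a ⬝ᵥ M.mulVec a) + Real.sqrt (b ⬝ᵥ M.mulVec b)) ^ 2) :=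
        Real.sqrt_le_sqrt hle
    _ = _ := Real.sqrt_sq (by positivity)

/-- The `M`-seminorm is invariant under negation. -/
private lemma mat_neg {d : ℕ} (M : Matrix (Fin d) (Fin d) ℝ) (a b : Fin d → ℝ) :
    (a - b) ⬝ᵥ M.mulVec (a - b) = (b - a) ⬝ᵥ M.mulVec (b - a) := by
  rw [show (a - b) = -(b - a) by ring]
  simp [Matrix.mulVec_neg, Matrix.mulVec_sub, dotProduct_sub, sub_dotProduct]
  ring

/-- Pessimism with a confidence ellipsoid: the suboptimality of the pessimistic policy
is at most 2η‖v(π*)‖_{Σ⁻¹}. -/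
theorem pessimism_ellipsoid_suboptimality
    {d : ℕ} {P : Type*} [Nonempty P]
    (S : Matrix (Fin d) (Fin d) ℝ) (hS : S.PosDef)
    (θhat θstar : Fin d → ℝ) (η : ℝ) (hη : 0 ≤ η)
    (hconf : Real.sqrt ((θhat - θstar) ⬝ᵥ S.mulVec (θhat - θstar)) ≤ η)
    (C : Set (Fin d → ℝ))
    (hC : C = {θ | Real.sqrt ((θ - θhat) ⬝ᵥ S.mulVec (θ - θhat)) ≤ η})
    (v : P → Fin d → ℝ)
    (πstar : P) (hπstar : ∀ π, v π ⬝ᵥ θstar ≤ v πstar ⬝ᵥ θstar)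
    (Jhat : P → ℝ) (hJhat : ∀ π, Jhat π = sInf {x : ℝ | ∃ θ ∈ C, x = v π ⬝ᵥ θ})
    (πhat : P) (hπhat : ∀ π, Jhat π ≤ Jhat πhat) :
    v πstar ⬝ᵥ θstar - v πhat ⬝ᵥ θstar ≤
      2 * η * Real.sqrt (v πstar ⬝ᵥ S⁻¹.mulVec (v πstar)) := by
  have hSinv : S⁻¹.PosDef := hS.inv
  have hdet : IsUnit S.det := isUnit_iff_ne_zero.2 (ne_of_gt hS.det_pos)
  -- cross Cauchy–Schwarz: ⟨w, u⟩ ≤ ‖w‖_{S⁻¹} ‖u‖_S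
  have cross : ∀ w u : Fin d → ℝ,
      w ⬝ᵥ u ≤ Real.sqrt (w ⬝ᵥ S⁻¹.mulVec w) * Real.sqrt (u ⬝ᵥ S.mulVec u) := by
    intro w u
    have h1 : S⁻¹.mulVec (S.mulVec u) = u := by
      rw [Matrix.mulVec_mulVec, Matrix.nonsing_inv_mul S hdet, Matrix.one_mulVec]
    have := mat_cs hSinv.posSemidef w (S.mulVec u)
    rw [h1, dotProduct_comm (S.mulVec u) u] at this
    exact this
  -- θstar is in the ellipsoid
  have hθstar : θstar ∈ C := by
    rw [hC]
    show Real.sqrt ((θstar - θhat) ⬝ᵥ S.mulVec (θstar - θhat)) ≤ η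
    rw [mat_neg]
    exact hconf
  -- every θ ∈ C is within 2η of θstar in the S-norm
  have hdist : ∀ θ ∈ C, Real.sqrt ((θstar - θ) ⬝ᵥ S.mulVec (θstar - θ)) ≤ 2 * η := by
    intro θ hθ
    rw [hC] at hθ
    have hθ' : Real.sqrt ((θ - θhat) ⬝ᵥ S.mulVec (θ - θhat)) ≤ η := hθ
    have hsplit : θstar - θ = (θstar - θhat) + (θhat - θ) := by ring
    calc Real.sqrt ((θstar - θ) ⬝ᵥ S.mulVec (θstar - θ))
        = Real.sqrt (((θstar - θhat) + (θhat - θ)) ⬝ᵥ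
            S.mulVec ((θstar - θhat) + (θhat - θ))) := by rw [hsplit]
      _ ≤ Real.sqrt ((θstar - θhat) ⬝ᵥ S.mulVec (θstar - θhat)) +
            Real.sqrt ((θhat - θ) ⬝ᵥ S.mulVec (θhat - θ)) :=
          mat_triangle hS.posSemidef _ _
      _ ≤ η + η := by
          gcongr
          · rw [mat_neg]; exact hconf
          · rw [mat_neg]; exact hθ'
      _ = 2 * η := by ring
  -- lower bound for elements of the inf set
  have hlb : ∀ π : P, ∀ x ∈ {x : ℝ | ∃ θ ∈ C, x = v π ⬝ᵥ θ},
      v π ⬝ᵥ θstar - 2 * η * Real.sqrt (v π ⬝ᵥ S⁻¹.mulVec (v π)) ≤ x := by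
    intro π x hx
    obtain ⟨θ, hθC, rfl⟩ := hx
    have hcs := cross (v π) (θstar - θ)
    have hd := hdist θ hθC
    have hsq := Real.sqrt_nonneg (v π ⬝ᵥ S⁻¹.mulVec (v π))
    have hdot : v π ⬝ᵥ (θstar - θ) = v π ⬝ᵥ θstar - v π ⬝ᵥ θ := by
      simp [dotProduct_sub]
    nlinarith [Real.sqrt_nonneg ((θstar - θ) ⬝ᵥ S.mulVec (θstar - θ))]
  have hbdd : ∀ π : P, BddBelow {x : ℝ | ∃ θ ∈ C, x = v π ⬝ᵥ θ} :=
    fun π => ⟨_, fun x hx => hlb π x hx⟩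
  have hne : ∀ π : P, ({x : ℝ | ∃ θ ∈ C, x = v π ⬝ᵥ θ}).Nonempty :=
    fun π => ⟨v π ⬝ᵥ θstar, θstar, hθstar, rfl⟩
  -- Jhat πstar is not much below v πstar ⬝ θstar
  have h1 : v πstar ⬝ᵥ θstar - 2 * η * Real.sqrt (v πstar ⬝ᵥ S⁻¹.mulVec (v πstar)) ≤
      Jhat πstar := by
    rw [hJhat]
    exact le_csInf (hne πstar) (hlb πstar)
  have h2 : Jhat πstar ≤ Jhat πhat := hπhat πstar
  have h3 : Jhat πhat ≤ v πhat ⬝ᵥ θstar := by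
    rw [hJhat]
    exact csInf_le (hbdd πhat) ⟨θstar, hθstar, rfl⟩
  linarith
end
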